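/- Let H be a real inner product space, let a≥0 be real, and let u, v, w ∈ H. Then ⟨(3/2)u − 2e^{−a}v + (1/2)e^{−2a}w, u⟩ ≥ (1/4)‖u‖² − (1/4)‖v‖² + (e^{−2a}/4)‖2e^{a}u − v‖² − (e^{−2a}/4)‖2e^{a}v − w‖². -/

import Mathlib

open Real

/-- energy inequality for the exponentially weighted BDF2 operator:
for a real inner product space `H`, `a ≥ 0` and `u, v, w ∈ H`,
`⟨(3/2)u − 2e^{−a}v + (1/2)e^{−2a}w, u⟩ ≥ (1/4)‖u‖² − (1/4)‖v‖²
  + (e^{−2a}/4)‖2e^{a}u − v‖² − (e^{−2a}/4)‖2e^{a}v − w‖²`. -/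
theorem bdf2_energy_inequality
    {H : Type*} [NormedAddCommGroup H] [InnerProductSpace ℝ H]
    (a : ℝ) (ha : 0 ≤ a) (u v w : H) :
    (inner ℝ ((3 / 2 : ℝ) • u - (2 * Real.exp (-a)) • v + (Real.exp (-(2 * a)) / 2) • w) u : ℝ)
      ≥ (1 / 4) * ‖u‖ ^ 2 - (1 / 4) * ‖v‖ ^ 2
        + (Real.exp (-(2 * a)) / 4) * ‖(2 * Real.exp a) • u - v‖ ^ 2
        - (Real.exp (-(2 * a)) / 4) * ‖(2 * Real.exp a) • v - w‖ ^ 2 := by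
  set e := Real.exp (-a) with he
  have h2 : Real.exp (-(2 * a)) = e * e := by
    rw [he, ← Real.exp_add]; ring_nf
  have he1 : e ≤ 1 := by rw [he]; exact Real.exp_le_one_iff.mpr (by linarith)
  have he0 : 0 < e := Real.exp_pos _
  have key : ∀ x y : H, Real.exp (-(2 * a)) / 4 * ‖(2 * Real.exp a) • x - y‖ ^ 2
      = ‖(2:ℝ) • x - e • y‖ ^ 2 / 4 := by
    intro x y
    have hee : e * (2 * Real.exp a) = 2 := by
      rw [he, mul_comm (2:ℝ), ← mul_assoc, ← Real.exp_add]; simp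
    have hs : (2:ℝ) • x - e • y = e • ((2 * Real.exp a) • x - y) := by
      rw [smul_sub, smul_smul, hee]
    rw [hs, norm_smul, mul_pow, Real.norm_eq_abs, abs_of_pos he0, h2]
    ring
  rw [key u v, key v w]
  have sq1 : (0:ℝ) ≤ ‖u - (2*e) • v + (e*e) • w‖^2 := sq_nonneg _
  have sq2 : (0:ℝ) ≤ ‖(2:ℝ) • v - e • w‖^2 := sq_nonneg _
  have expand : ∀ x : H, ‖x‖^2 = (inner ℝ x x : ℝ) := fun x => (real_inner_self_eq_norm_sq x).symm
  have hvv : (0:ℝ) ≤ inner ℝ v v := real_inner_self_nonneg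
  have c1 : (inner ℝ u v : ℝ) = inner ℝ v u := real_inner_comm v u
  have c2 : (inner ℝ u w : ℝ) = inner ℝ w u := real_inner_comm w u
  have c3 : (inner ℝ v w : ℝ) = inner ℝ w v := real_inner_comm w v
  have h1e2 : (0:ℝ) ≤ 1 - e * e := by nlinarith
  simp only [h2, expand, inner_add_left, inner_sub_left, inner_add_right, inner_sub_right,
    real_inner_smul_left, real_inner_smul_right] at sq1 sq2 ⊢
  nlinarith [sq1, mul_nonneg h1e2 sq2, mul_nonneg h1e2 hvv]
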